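/- Let (S_1, T_1), ..., (S_r, T_r) be pairs where each S_i ⊆ [n] with |S_i| > 1 and each T_i is a spanning tree of the complete graph on [n]. Define f(S, T) = 0 if the induced subgraph of T on S is connected, and f(S, T) = 1 otherwise. Suppose the family is a fooling set: f(S_j, T_j) = 1 for all j, and for all i ≠ j, f(S_i, T_j) · f(S_j, T_i) = 0. Then r ≤ n²(n-1) + n(n-1)/2 (in particular r = O(n²)). -/

import Mathlib

open SimpleGraph

private lemma reachable_induce_of_walk {V : Type*} {G : SimpleGraph V} {S : Set V} :
    ∀ {u v : V} (w : G.Walk u v) (_ : ∀ x ∈ w.support, x ∈ S)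
      (hu : u ∈ S) (hv : v ∈ S), (G.induce S).Reachable ⟨u, hu⟩ ⟨v, hv⟩ := by
  intro u v w
  induction w with
  | nil => intro _ hu hv; exact Reachable.refl _
  | @cons a c b hadj p ih =>
    intro h hu hv
    have hc : c ∈ S := h c (by simp)
    refine Reachable.trans (Adj.reachable ?_) (ih (fun x hx => h x (by simp [hx])) hc hv)
    simpa using hadj

private lemma key_lemma {n : ℕ} (S : Set (Fin n)) (T : SimpleGraph (Fin n))
    (hT : T.IsTree) (hS : 1 < S.ncard) (hd : ¬ (T.induce S).Connected) :
    ∃ a b y : Fin n, a ≠ b ∧ a ∈ S ∧ b ∈ S ∧ y ∉ S ∧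
      ∀ w : T.Walk a b, y ∈ w.support := by
  have hne : S.Nonempty := by
    rcases Set.eq_empty_or_nonempty S with h | h
    · simp [h] at hS
    · exact h
  have : Nonempty ↥S := hne.to_subtype
  rw [connected_iff] at hd
  push_neg at hd
  have hd' : ¬ (T.induce S).Preconnected := fun hp => (not_isEmpty_iff.mpr this) (hd hp)
  unfold SimpleGraph.Preconnected at hd'
  push_neg at hd'
  obtain ⟨a, b, hab⟩ := hd'
  have hab' : (a : Fin n) ≠ (b : Fin n) := by
    intro h
    exact hab (by rw [Subtype.ext h])
  obtain ⟨w⟩ := hT.isConnected.preconnected (a : Fin n) (b : Fin n)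
  set p : T.Path a.1 b.1 := w.toPath with hp
  have hy : ∃ y ∈ (p : T.Walk a.1 b.1).support, y ∉ S := by
    by_contra h
    push_neg at h
    exact hab (reachable_induce_of_walk (p : T.Walk a.1 b.1) h a.2 b.2)
  obtain ⟨y, hyp, hyS⟩ := hy
  refine ⟨a, b, y, hab', a.2, b.2, hyS, fun w' => ?_⟩
  have := hT.IsAcyclic.path_unique w'.toPath p
  have : y ∈ (w'.toPath : T.Walk a.1 b.1).support := by rw [this]; exact hyp
  exact Walk.support_toPath_subset w' this

theorem stmt_5 {n r : ℕ} (S : Fin r → Set (Fin n))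
    (T : Fin r → SimpleGraph (Fin n))
    (hT : ∀ i, (T i).IsTree) (hS : ∀ i, 1 < (S i).ncard)
    (hdiag : ∀ j, ¬ ((T j).induce (S j)).Connected)
    (hoff : ∀ i j, i ≠ j →
      ((T j).induce (S i)).Connected ∨ ((T i).induce (S j)).Connected) :
    r ≤ n ^ 2 * (n - 1) + n * (n - 1) / 2 := by
  have key : ∀ j, ∃ a b y : Fin n, a ≠ b ∧ a ∈ S j ∧ b ∈ S j ∧ y ∉ S j ∧
      ∀ w : (T j).Walk a b, y ∈ w.support :=
    fun j => key_lemma (S j) (T j) (hT j) (hS j) (hdiag j)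
  choose a b y hab haS hbS hyS hyW using key
  -- the signature map is injective
  have hinj : Function.Injective (fun j => ((a j, b j), y j)) := by
    intro i j hij
    by_contra hne
    simp only [Prod.mk.injEq] at hij
    obtain ⟨⟨ha, hb⟩, hy⟩ := hij
    -- helper: if induce (T k) (S m) connected with a k, b k ∈ S m and y k ∉ S m, contradiction
    have main : ∀ k m : Fin r, a k ∈ S m → b k ∈ S m → y k ∉ S m →
        ¬ ((T k).induce (S m)).Connected := by
      intro k m hka hkb hky hc
      obtain ⟨w0⟩ := hc.preconnected ⟨a k, hka⟩ ⟨b k, hkb⟩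
      have hw := hyW k (w0.map (SimpleGraph.Embedding.induce (S m)).toHom)
      erw [Walk.support_map] at hw
      obtain ⟨u, _, hu⟩ := List.mem_map.mp hw
      exact hky (hu ▸ u.2)
    rcases hoff i j hne with hc | hc
    · -- induce (T j) (S i) connected; but a j = a i ∈ S i, b j ∈ S i, y j = y i ∉ S i
      exact main j i (ha ▸ haS i) (hb ▸ hbS i) (hy ▸ hyS i) hc
    · exact main i j (ha.symm ▸ haS j) (hb.symm ▸ hbS j) (hy.symm ▸ hyS j) hc
  -- count
  have hsub : ∀ j, ((a j, b j), y j) ∈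
      (Finset.univ.offDiag ×ˢ Finset.univ : Finset ((Fin n × Fin n) × Fin n)) := by
    intro j
    simp [Finset.mem_offDiag, hab j]
  have hcard : r ≤ n * (n - 1) * n := by
    have hc := Finset.card_le_card_of_injOn (s := (Finset.univ : Finset (Fin r))) (fun j => ((a j, b j), y j))
      (fun j _ => hsub j) (fun i _ j _ h => hinj h)
    have heq : n * n - n = n * (n - 1) := by
      cases n with
      | zero => simp
      | succ m =>
        have : (m+1)*(m+1) = (m+1)*m + (m+1) := by ring
        simp [Nat.succ_sub_one]
        omega
    simpa [Finset.offDiag_card, Finset.card_univ, heq] using hc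
  have : n * (n - 1) * n = n ^ 2 * (n - 1) := by ring
  omega
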